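/- Let X be a nonempty complete subset of a normed space Y and let F be a multivalued mapping from X to Y with nonempty bounded values that is an α-contraction for some α < 1 (with respect to the metric induced by the norm). Assume that for each x ∈ X there exists a nearest point t of F(x) to x (i.e. t ∈ F(x) with ‖x−t‖ = d(x,F(x))) such that t ∈ I_X(x). Then for each x ∈ X with x ∉ F(x) there exists z ∈ X with z ≠ x and (1−α) ‖x−z‖ ≤ d(x,F(x)) − d(z,F(z)), and F has a fixed point. -/
import Mathlib


open Metric Filter

/-- The inward set `I_X(x) = x + {λ(z −x) : z ∈ X, λ ≥ 1}` in a normed space. -/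
def inwardSet {Y : Type*} [NormedAddCommGroup Y] [NormedSpace ℝ Y]
    (X : Set Y) (x : Y) : Set Y :=
  {t | ∃ z ∈ X, ∃ l : ℝ, 1 ≤ l ∧ t = x + l • (z - x)}

/-- **Theorem 3.7.** Let `X` be a nonempty complete subset of a normed space `Y` and `F`
an `α`-contraction (`α < 1`) from `X` to `Y` with nonempty bounded values. If each
`x ∈ X` has a nearest point `t` in `F(x)` with `t ∈ I_X(x)`, then for each `x ∈ X` with
`x ∉ F(x)` there exists `z ∈ X`, `z ≠ x`, with
`(1−α)·‖x−z‖ ≤ d(x,F(x)) − d(z,F(z))`, and `F` has a fixed point. -/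
theorem fixed_point_of_inward_contraction
    {Y : Type*} [NormedAddCommGroup Y] [NormedSpace ℝ Y]
    (X : Set Y) (hX : X.Nonempty) (hXc : IsComplete X)
    (α : ℝ) (hα1 : α < 1)
    (F : X → Set Y) (hFne : ∀ x, (F x).Nonempty)
    (hFbdd : ∀ x, Bornology.IsBounded (F x))
    (hcontr : ∀ x y : X, hausdorffDist (F y) (F x) ≤ α * ‖(y : Y) - (x : Y)‖)
    (hnear : ∀ x : X, ∃ t ∈ F x,
      ‖(x : Y) - t‖ = infDist (x : Y) (F x) ∧ t ∈ inwardSet X (x : Y)) :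
    (∀ x : X, (x : Y) ∉ F x → ∃ z : X, z ≠ x ∧
      (1 - α) * ‖(x : Y) - (z : Y)‖ ≤
        infDist (x : Y) (F x) - infDist (z : Y) (F z)) ∧
    ∃ x : X, (x : Y) ∈ F x := by
  have hfin : ∀ x y : X, EMetric.hausdorffEdist (F x) (F y) ≠ ⊤ := fun x y =>
    hausdorffEdist_ne_top_of_nonempty_of_bounded (hFne x) (hFne y) (hFbdd x) (hFbdd y)
  set f : X → ℝ := fun x => infDist (x : Y) (F x) with hf
  -- Part 1: the step
  have part1 : ∀ x : X, (x : Y) ∉ F x → ∃ z : X, z ≠ x ∧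
      (1 - α) * ‖(x : Y) - (z : Y)‖ ≤ f x - f z := by
    intro x hx
    obtain ⟨t, htF, htd, z₀, hz₀X, l, hl, htl⟩ := hnear x
    set z : X := ⟨z₀, hz₀X⟩ with hzdef
    have hl0 : (0 : ℝ) < l := lt_of_lt_of_le one_pos hl
    have hxt : (x : Y) ≠ t := fun h => hx (h ▸ htF)
    have hd0 : 0 < ‖(x : Y) - t‖ := by
      rw [norm_pos_iff, sub_ne_zero]; exact hxt
    have htx : t - (x : Y) = l • (z₀ - (x : Y)) := by
      rw [htl]; abel
    have hzx : z₀ - (x : Y) = l⁻¹ • (t - (x : Y)) := by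
      rw [htx, smul_smul, inv_mul_cancel₀ (ne_of_gt hl0), one_smul]
    have hnzx : ‖(x : Y) - z₀‖ = l⁻¹ * ‖(x : Y) - t‖ := by
      rw [← norm_neg ((x:Y) - z₀), neg_sub, hzx, norm_smul,
        Real.norm_eq_abs, abs_of_pos (inv_pos.2 hl0), ← norm_neg (t - (x:Y)), neg_sub]
    have htz : t - z₀ = (1 - l⁻¹) • (t - (x : Y)) := by
      have : t - z₀ = (t - (x : Y)) - (z₀ - (x : Y)) := by abel
      rw [this, hzx, sub_smul, one_smul]
    have hli : l⁻¹ ≤ 1 := by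
      rw [inv_le_one_iff₀]; right; exact hl
    have hntz : ‖z₀ - t‖ = (1 - l⁻¹) * ‖(x : Y) - t‖ := by
      rw [← norm_neg (z₀ - t), neg_sub, htz, norm_smul, Real.norm_eq_abs,
        abs_of_nonneg (by linarith), ← norm_neg (t - (x:Y)), neg_sub]
    have hzne : z ≠ x := by
      intro h
      have : z₀ = (x : Y) := congrArg Subtype.val h
      rw [this, sub_self, norm_zero] at hnzx
      have : 0 < l⁻¹ * ‖(x : Y) - t‖ := mul_pos (inv_pos.2 hl0) hd0
      linarith
    refine ⟨z, hzne, ?_⟩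
    have h1 : infDist (z₀ : Y) (F z) ≤ infDist (z₀ : Y) (F x) + hausdorffDist (F x) (F z) :=
      infDist_le_infDist_add_hausdorffDist (hfin x z)
    have h2 : infDist (z₀ : Y) (F x) ≤ ‖z₀ - t‖ := by
      have := infDist_le_dist_of_mem (x := (z₀ : Y)) htF
      rwa [dist_eq_norm] at this
    have h3 : hausdorffDist (F x) (F z) ≤ α * ‖(x : Y) - z₀‖ := hcontr z x
    have hfz : f z ≤ ‖z₀ - t‖ + α * ‖(x : Y) - z₀‖ := le_trans h1 (by linarith)
    have hfx : f x = ‖(x : Y) - t‖ := htd.symm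
    have : (z : Y) = z₀ := rfl
    rw [this, hnzx]
    rw [hnzx] at hfz
    rw [hntz] at hfz
    rw [hfx]
    nlinarith [hd0, inv_pos.2 hl0]
  refine ⟨part1, ?_⟩
  -- Part 2: fixed point
  by_contra hno
  push_neg at hno
  have hstep0 : ∀ x : X, ∃ z : X, z ≠ x ∧ (1 - α) * dist x z ≤ f x - f z := by
    intro x
    obtain ⟨z, hz, h⟩ := part1 x (hno x)
    exact ⟨z, hz, by rwa [Subtype.dist_eq, dist_eq_norm]⟩
  obtain ⟨x₀y, hx₀y⟩ := hX
  set x₀ : X := ⟨x₀y, hx₀y⟩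
  -- X is not a subsingleton: indeed z ≠ x₀ exists, so α ≥ 0
  obtain ⟨z₁, hz₁, _⟩ := hstep0 x₀
  have hα0 : 0 ≤ α := by
    have h1 := hcontr x₀ z₁
    have h2 : (0:ℝ) ≤ hausdorffDist (F z₁) (F x₀) := hausdorffDist_nonneg
    have h3 : 0 < ‖(z₁ : Y) - (x₀ : Y)‖ := by
      rw [norm_pos_iff, sub_ne_zero]
      exact fun h => hz₁ (Subtype.ext h)
    nlinarith
  have hαpos : (0:ℝ) < 1 - α := by linarith
  have hf0 : ∀ x : X, 0 ≤ f x := fun x => infDist_nonneg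
  -- Lipschitz-type bound for f
  have hflip : ∀ a b : X, f a ≤ f b + (1 + α) * dist a b := by
    intro a b
    have h1 : infDist (a : Y) (F a) ≤ infDist (b : Y) (F a) + dist (a : Y) (b : Y) :=
      infDist_le_infDist_add_dist
    have h2 : infDist (b : Y) (F a) ≤ infDist (b : Y) (F b) + hausdorffDist (F b) (F a) :=
      infDist_le_infDist_add_hausdorffDist (hfin b a)
    have h3 : hausdorffDist (F b) (F a) ≤ α * ‖(b : Y) - (a : Y)‖ := hcontr a b
    have h4 : ‖(b : Y) - (a : Y)‖ = dist a b := by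
      rw [Subtype.dist_eq, dist_eq_norm, ← norm_neg ((b:Y) - a), neg_sub]
    have h5 : dist (a : Y) (b : Y) = dist a b := (Subtype.dist_eq a b).symm
    rw [h4] at h3; rw [h5] at h1
    calc f a ≤ infDist (b : Y) (F a) + dist a b := h1
      _ ≤ f b + hausdorffDist (F b) (F a) + dist a b := by linarith
      _ ≤ f b + (1 + α) * dist a b := by nlinarith [dist_nonneg (x := a) (y := b)]
  set S : X → Set X := fun x => {y | (1 - α) * dist x y ≤ f x - f y} with hS
  have hself : ∀ x : X, x ∈ S x := by
    intro x; simp [hS, dist_self]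
  have htrans : ∀ x y w : X, y ∈ S x → w ∈ S y → w ∈ S x := by
    intro x y w hy hw
    simp only [hS, Set.mem_setOf_eq] at *
    have := dist_triangle x y w
    nlinarith
  have hSne : ∀ x : X, (f '' S x).Nonempty := fun x => ⟨f x, x, hself x, rfl⟩
  have hSbdd : ∀ x : X, BddBelow (f '' S x) := by
    intro x
    exact ⟨0, fun r ⟨y, _, hy⟩ => hy ▸ hf0 y⟩
  have hch : ∀ (n : ℕ) (x : X), ∃ y : X, y ∈ S x ∧ f y < sInf (f '' S x) + (1/2)^n := by
    intro n x
    obtain ⟨r, ⟨y, hyS, rfl⟩, hr⟩ := Real.lt_sInf_add_pos (hSne x)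
      (ε := (1/2)^n) (by positivity)
    exact ⟨y, hyS, hr⟩
  set u : ℕ → X := fun n => Nat.rec x₀ (fun n xn => (hch n xn).choose) n with hu
  have hu0 : u 0 = x₀ := rfl
  have husucc : ∀ n, u (n+1) = (hch n (u n)).choose := fun n => rfl
  have huS : ∀ n, u (n+1) ∈ S (u n) := fun n => ((hch n (u n)).choose_spec).1
  have huInf : ∀ n, f (u (n+1)) < sInf (f '' S (u n)) + (1/2)^n :=
    fun n => ((hch n (u n)).choose_spec).2
  have hmem : ∀ n m, n ≤ m → u m ∈ S (u n) := by
    intro n m hnm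
    induction m, hnm using Nat.le_induction with
    | base => exact hself _
    | succ m hm ih => exact htrans _ _ _ ih (huS m)
  -- distance bound
  have hdb : ∀ n m, n + 1 ≤ m → (1 - α) * dist (u (n+1)) (u m) ≤ (1/2)^n := by
    intro n m hnm
    have h1 := hmem (n+1) m hnm
    have h2 : sInf (f '' S (u n)) ≤ f (u m) :=
      csInf_le (hSbdd (u n)) ⟨u m, hmem n m (by omega), rfl⟩
    have h3 := huInf n
    simp only [hS, Set.mem_setOf_eq] at h1
    linarith
  have hcauchy : CauchySeq u := by
    apply cauchySeq_of_le_tendsto_0' (fun n => (f x₀ + 2) * (1/2)^n / (1 - α))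
    · intro n m hnm
      have hfm := hf0 (u m)
      rcases Nat.eq_zero_or_pos n with h0 | hpos
      · subst h0
        have h1 := hmem 0 m (Nat.zero_le m)
        simp only [hS, Set.mem_setOf_eq, hu0] at h1
        rw [hu0, le_div_iff₀ hαpos]
        simp only [pow_zero, mul_one]
        nlinarith
      · obtain ⟨k, rfl⟩ : ∃ k, n = k + 1 := ⟨n - 1, by omega⟩
        have h1 := hdb k m hnm
        have h2 : (0:ℝ) ≤ f x₀ := hf0 x₀
        rw [le_div_iff₀ hαpos]
        calc dist (u (k+1)) (u m) * (1 - α) ≤ (1/2)^k := by linarith [h1]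
          _ = 2 * (1/2)^(k+1) := by ring
          _ ≤ (f x₀ + 2) * (1/2)^(k+1) := by
              have : (0:ℝ) < (1/2:ℝ)^(k+1) := by positivity
              nlinarith
    · have : Tendsto (fun n : ℕ => ((1:ℝ)/2)^n) atTop (nhds 0) :=
        tendsto_pow_atTop_nhds_zero_of_lt_one (by norm_num) (by norm_num)
      have := (this.const_mul (f x₀ + 2)).div_const (1 - α)
      simpa using this
  -- limit point
  have hvmem : ∀ n, ((u n : Y)) ∈ X := fun n => (u n).2
  have hcauchy' : CauchySeq (fun n => (u n : Y)) := by
    rw [Metric.cauchySeq_iff] at hcauchy ⊢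
    intro ε hε
    obtain ⟨N, hN⟩ := hcauchy ε hε
    exact ⟨N, fun m hm n hn => by rw [← Subtype.dist_eq]; exact hN m hm n hn⟩
  obtain ⟨y, hyX, hylim⟩ := cauchySeq_tendsto_of_isComplete hXc hvmem hcauchy'
  set xs : X := ⟨y, hyX⟩
  have hulim : Tendsto u atTop (nhds xs) := by
    rw [Metric.tendsto_atTop] at hylim ⊢
    intro ε hε
    obtain ⟨N, hN⟩ := hylim ε hε
    exact ⟨N, fun n hn => by rw [Subtype.dist_eq]; exact hN n hn⟩
  have hdlim : Tendsto (fun n => dist (u n) xs) atTop (nhds 0) :=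
    tendsto_iff_dist_tendsto_zero.mp hulim
  -- f (u n) → f xs
  have hflim : Tendsto (fun n => f (u n)) atTop (nhds (f xs)) := by
    have hb : ∀ n, ‖f (u n) - f xs‖ ≤ (1 + α) * dist (u n) xs := by
      intro n
      rw [Real.norm_eq_abs, abs_sub_le_iff]
      constructor
      · have := hflip (u n) xs; linarith
      · have := hflip xs (u n); rw [dist_comm] at this; linarith
    have h0 : Tendsto (fun n => (1 + α) * dist (u n) xs) atTop (nhds 0) := by
      simpa using hdlim.const_mul (1 + α)
    have := squeeze_zero_norm hb h0
    have h2 : Tendsto (fun n => f (u n) - f xs + f xs) atTop (nhds (0 + f xs)) :=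
      this.add tendsto_const_nhds
    simpa using h2
  -- xs ∈ S (u n) for all n
  have hxsS : ∀ n, xs ∈ S (u n) := by
    intro n
    simp only [hS, Set.mem_setOf_eq]
    have hL : Tendsto (fun m => (1 - α) * dist (u n) (u m)) atTop
        (nhds ((1 - α) * dist (u n) xs)) := by
      exact ((tendsto_const_nhds.dist hulim).const_mul (1 - α))
    have hR : Tendsto (fun m => f (u n) - f (u m)) atTop (nhds (f (u n) - f xs)) :=
      tendsto_const_nhds.sub hflim
    refine le_of_tendsto_of_tendsto hL hR ?_
    filter_upwards [eventually_ge_atTop n] with m hm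
    exact hmem n m hm
  -- the step at xs contradicts minimality
  obtain ⟨z, hzne, hzS⟩ := hstep0 xs
  have hzSn : ∀ n, z ∈ S (u n) := fun n => htrans _ _ _ (hxsS n) hzS
  have hzbound : ∀ n, (1 - α) * dist xs z ≤ f xs - f (u (n+1)) + (1/2)^n := by
    intro n
    have h2 : sInf (f '' S (u n)) ≤ f z := csInf_le (hSbdd (u n)) ⟨z, hzSn n, rfl⟩
    have h3 := huInf n
    linarith [hzS]
  have hRlim : Tendsto (fun n : ℕ => f xs - f (u (n+1)) + (1/2)^n) atTop (nhds 0) := by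
    have h1 : Tendsto (fun n : ℕ => f (u (n+1))) atTop (nhds (f xs)) :=
      (tendsto_add_atTop_iff_nat 1).2 hflim
    have h2 : Tendsto (fun n : ℕ => ((1:ℝ)/2)^n) atTop (nhds 0) :=
      tendsto_pow_atTop_nhds_zero_of_lt_one (by norm_num) (by norm_num)
    have h3 : Tendsto (fun n : ℕ => f xs - f (u (n+1)) + (1/2)^n) atTop
        (nhds (f xs - f xs + 0)) := ((tendsto_const_nhds (x := f xs)).sub h1).add h2
    simpa using h3
  have hfinal : (1 - α) * dist xs z ≤ 0 :=
    le_of_tendsto_of_tendsto' tendsto_const_nhds hRlim hzbound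
  have hdpos : 0 < dist xs z := dist_pos.2 (fun h => hzne h.symm)
  nlinarith
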